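/- arXiv:1302.0399 — 13 statements merged into one kernel-verified Lean document; each statement's English description precedes it below -/
import Mathlib

section
/- Let (A, ·) be a (possibly non-unital) associative algebra over a field k and let f : A → A be a linear map satisfying f(x·y) = x·f(y) for all x, y ∈ A (a left semi-homomorphism). Define x ∘₁ y := x·y and x ∘₂ y := f(x)·y. Then (A, ∘₁, ∘₂) is a matching dialgebra; that is, ∘₁ and ∘₂ are both associative and satisfy (x ∘₁ y) ∘₂ z = x ∘₁ (y ∘₂ z) and (x ∘₂ y) ∘₁ z = x ∘₂ (y ∘₁ z) for all x, y, z ∈ A. -/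
/-- If `f` is a left semi-homomorphism of a (possibly non-unital) associative
`k`-algebra `A`, i.e. `f (x * y) = x * f y`, then `x ∘₁ y := x * y` and
`x ∘₂ y := f x * y` make `A` a matching dialgebra: both products are
associative and `(x ∘₁ y) ∘₂ z = x ∘₁ (y ∘₂ z)`,
`(x ∘₂ y) ∘₁ z = x ∘₂ (y ∘₁ z)`. -/
theorem matching_dialgebra_of_left_semi_homomorphism
    {k A : Type*} [Field k] [NonUnitalRing A] [Module k A]
    [SMulCommClass k A A] [IsScalarTower k A A]
    (f : A →ₗ[k] A) (hf : ∀ x y : A, f (x * y) = x * f y)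
    (o1 o2 : A → A → A)
    (ho1 : ∀ x y : A, o1 x y = x * y)
    (ho2 : ∀ x y : A, o2 x y = f x * y) :
    (∀ x y z : A, o1 (o1 x y) z = o1 x (o1 y z)) ∧
    (∀ x y z : A, o2 (o2 x y) z = o2 x (o2 y z)) ∧
    (∀ x y z : A, o2 (o1 x y) z = o1 x (o2 y z)) ∧
    (∀ x y z : A, o1 (o2 x y) z = o2 x (o1 y z)) := by
  refine ⟨fun x y z => ?_, fun x y z => ?_, fun x y z => ?_, fun x y z => ?_⟩ <;>
    simp only [ho1, ho2, hf, mul_assoc]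
end

section
/- Let (A, ·) be a (possibly non-unital) associative algebra over a field k and let f : A → A be a linear map satisfying f(x·y) = f(x)·y for all x, y ∈ A (a right semi-homomorphism). Define x ∘₁ y := x·y and x ∘₂ y := x·f(y). Then (A, ∘₁, ∘₂) is a matching dialgebra; that is, ∘₁ and ∘₂ are both associative and satisfy (x ∘₁ y) ∘₂ z = x ∘₁ (y ∘₂ z) and (x ∘₂ y) ∘₁ z = x ∘₂ (y ∘₁ z) for all x, y, z ∈ A. -/
/-- If `f` is a right semi-homomorphism of a (possibly non-unital) associative
`k`-algebra `A`, i.e. `f (x * y) = f x * y`, then `x ∘₁ y := x * y` and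
`x ∘₂ y := x * f y` make `A` a matching dialgebra. -/
theorem matching_dialgebra_of_right_semi_homomorphism
    {k A : Type*} [Field k] [NonUnitalRing A] [Module k A]
    [SMulCommClass k A A] [IsScalarTower k A A]
    (f : A →ₗ[k] A) (hf : ∀ x y : A, f (x * y) = f x * y)
    (o1 o2 : A → A → A)
    (ho1 : ∀ x y : A, o1 x y = x * y)
    (ho2 : ∀ x y : A, o2 x y = x * f y) :
    (∀ x y z : A, o1 (o1 x y) z = o1 x (o1 y z)) ∧
    (∀ x y z : A, o2 (o2 x y) z = o2 x (o2 y z)) ∧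
    (∀ x y z : A, o2 (o1 x y) z = o1 x (o2 y z)) ∧
    (∀ x y z : A, o1 (o2 x y) z = o2 x (o1 y z)) := by
  refine ⟨fun x y z => ?_, fun x y z => ?_, fun x y z => ?_, fun x y z => ?_⟩ <;>
    simp [ho1, ho2, hf, mul_assoc]
end

section
/- Let (A, ·) be a (possibly non-unital) associative algebra over a field k and let f, g : A → A be linear maps that are both semi-homomorphisms, i.e. f(x·y) = f(x)·y = x·f(y) and g(x·y) = g(x)·y = x·g(y) for all x, y ∈ A. Define x ∘₁ y := f(x)·y and x ∘₂ y := g(x)·y. Then (A, ∘₁, ∘₂) is a matching dialgebra; that is, ∘₁ and ∘₂ are both associative and satisfy (x ∘₁ y) ∘₂ z = x ∘₁ (y ∘₂ z) and (x ∘₂ y) ∘₁ z = x ∘₂ (y ∘₁ z) for all x, y, z ∈ A. -/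
/-- If `f` and `g` are semi-homomorphisms of a (possibly non-unital) associative
`k`-algebra `A`, i.e. `f (x * y) = f x * y = x * f y` and likewise for `g`, then
`x ∘₁ y := f x * y` and `x ∘₂ y := g x * y` make `A` a matching dialgebra. -/
theorem matching_dialgebra_of_two_semi_homomorphisms
    {k A : Type*} [Field k] [NonUnitalRing A] [Module k A]
    [SMulCommClass k A A] [IsScalarTower k A A]
    (f g : A →ₗ[k] A)
    (hf1 : ∀ x y : A, f (x * y) = f x * y) (hf2 : ∀ x y : A, f (x * y) = x * f y)
    (hg1 : ∀ x y : A, g (x * y) = g x * y) (hg2 : ∀ x y : A, g (x * y) = x * g y)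
    (o1 o2 : A → A → A)
    (ho1 : ∀ x y : A, o1 x y = f x * y)
    (ho2 : ∀ x y : A, o2 x y = g x * y) :
    (∀ x y z : A, o1 (o1 x y) z = o1 x (o1 y z)) ∧
    (∀ x y z : A, o2 (o2 x y) z = o2 x (o2 y z)) ∧
    (∀ x y z : A, o2 (o1 x y) z = o1 x (o2 y z)) ∧
    (∀ x y z : A, o1 (o2 x y) z = o2 x (o1 y z)) := by
  refine ⟨fun x y z => ?_, fun x y z => ?_, fun x y z => ?_, fun x y z => ?_⟩ <;>
    simp only [ho1, ho2, hf2, hg2, mul_assoc]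
end

section
/- Let A be a k-vector space with two bilinear associative products ∘₁ and ∘₂. Define a bilinear product on the direct sum A ⊕ A by (a, b) · (c, d) := (a ∘₁ c + a ∘₂ d, b ∘₂ d + b ∘₁ c). Then (A, ∘₁, ∘₂) is a matching dialgebra if and only if the product · on A ⊕ A is associative. -/
/-- For a `k`-vector space `A` with two bilinear associative products `o1`, `o2`,
define on `A ⊕ A` the product `(a, b) · (c, d) = (a ∘₁ c + a ∘₂ d, b ∘₂ d + b ∘₁ c)`.
Then `(A, o1, o2)` is a matching dialgebra if and only if this product is
associative. -/
theorem matching_dialgebra_iff_directSum_assoc_left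
    {k A : Type*} [Field k] [AddCommGroup A] [Module k A]
    (o1 o2 : A →ₗ[k] A →ₗ[k] A)
    (h1 : ∀ x y z : A, o1 (o1 x y) z = o1 x (o1 y z))
    (h2 : ∀ x y z : A, o2 (o2 x y) z = o2 x (o2 y z))
    (m : A × A → A × A → A × A)
    (hm : ∀ a b c d : A,
      m (a, b) (c, d) = (o1 a c + o2 a d, o2 b d + o1 b c)) :
    ((∀ x y z : A, o2 (o1 x y) z = o1 x (o2 y z)) ∧
     (∀ x y z : A, o1 (o2 x y) z = o2 x (o1 y z))) ↔
    (∀ p q r : A × A, m (m p q) r = m p (m q r)) := by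
  constructor
  · rintro ⟨ha, hb⟩ ⟨a, b⟩ ⟨c, d⟩ ⟨e, f⟩
    rw [hm, hm, hm, hm]
    simp only [map_add, LinearMap.add_apply, Prod.mk.injEq]
    constructor
    · rw [h1, h2, ha, hb]; abel
    · rw [h1, h2, ha, hb]; abel
  · intro hA
    constructor
    · intro x y z
      have := hA (x, 0) (y, 0) (0, z)
      rw [hm, hm, hm, hm] at this
      simpa [h1, h2] using congrArg Prod.fst this
    · intro x y z
      have := hA (x, 0) (0, y) (z, 0)
      rw [hm, hm, hm, hm] at this
      simpa [h1, h2] using congrArg Prod.fst this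
end

section
/- Let A be a k-vector space with two bilinear associative products ∘₁ and ∘₂. Define a bilinear product on the direct sum A ⊕ A by (a, b) ∘ (c, d) := (a ∘₁ c + b ∘₂ c, b ∘₂ d + a ∘₁ d). Then (A, ∘₁, ∘₂) is a matching dialgebra if and only if the product ∘ on A ⊕ A is associative. -/
/-- For a `k`-vector space `A` with two bilinear associative products `o1`, `o2`,
define on `A ⊕ A` the product `(a, b) ∘ (c, d) = (a ∘₁ c + b ∘₂ c, b ∘₂ d + a ∘₁ d)`.
Then `(A, o1, o2)` is a matching dialgebra if and only if this product is
associative. -/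
theorem matching_dialgebra_iff_directSum_assoc_right
    {k A : Type*} [Field k] [AddCommGroup A] [Module k A]
    (o1 o2 : A →ₗ[k] A →ₗ[k] A)
    (h1 : ∀ x y z : A, o1 (o1 x y) z = o1 x (o1 y z))
    (h2 : ∀ x y z : A, o2 (o2 x y) z = o2 x (o2 y z))
    (m : A × A → A × A → A × A)
    (hm : ∀ a b c d : A,
      m (a, b) (c, d) = (o1 a c + o2 b c, o2 b d + o1 a d)) :
    ((∀ x y z : A, o2 (o1 x y) z = o1 x (o2 y z)) ∧
     (∀ x y z : A, o1 (o2 x y) z = o2 x (o1 y z))) ↔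
    (∀ p q r : A × A, m (m p q) r = m p (m q r)) := by
  constructor
  · rintro ⟨ha, hb⟩ ⟨a, b⟩ ⟨c, d⟩ ⟨e, f⟩
    simp only [hm, map_add, LinearMap.add_apply, Prod.mk.injEq]
    constructor
    · rw [h1, h2, ha, hb]; abel
    · rw [h1, h2, ha, hb]; abel
  · intro H
    constructor
    · intro x y z
      have := H (x, 0) (0, y) (z, 0)
      simp only [hm, map_zero, LinearMap.zero_apply, zero_add, add_zero,
        LinearMap.map_zero, Prod.mk.injEq] at this
      exact this.1
    · intro x y z
      have := H (0, x) (y, 0) (0, z)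
      simp only [hm, map_zero, LinearMap.zero_apply, zero_add, add_zero,
        LinearMap.map_zero, Prod.mk.injEq] at this
      exact this.2
end

section
/- Let (A, ∘₁, ∘₂) be a matching dialgebra over a field k. Then the associative products ∘₁ and ∘₂ are compatible: for all scalars α, β ∈ k, the bilinear product x ⋆ y := α (x ∘₁ y) + β (x ∘₂ y) is associative, i.e. (x ⋆ y) ⋆ z = x ⋆ (y ⋆ z) for all x, y, z ∈ A. -/
/-- In a matching dialgebra `(A, o1, o2)` over a field `k`, the two associative
products are compatible: every linear combination `x ⋆ y = α • (x ∘₁ y) + β • (x ∘₂ y)`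
is associative. -/
theorem matching_dialgebra_compatible_associative
    {k A : Type*} [Field k] [AddCommGroup A] [Module k A]
    (o1 o2 : A →ₗ[k] A →ₗ[k] A)
    (h1 : ∀ x y z : A, o1 (o1 x y) z = o1 x (o1 y z))
    (h2 : ∀ x y z : A, o2 (o2 x y) z = o2 x (o2 y z))
    (h12 : ∀ x y z : A, o2 (o1 x y) z = o1 x (o2 y z))
    (h21 : ∀ x y z : A, o1 (o2 x y) z = o2 x (o1 y z)) :
    ∀ (α β : k) (star : A → A → A),
      (∀ x y : A, star x y = α • o1 x y + β • o2 x y) →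
      ∀ x y z : A, star (star x y) z = star x (star y z) := by
  intro α β star hstar x y z
  simp only [hstar, map_add, map_smul, LinearMap.add_apply, LinearMap.smul_apply,
    smul_add, h1, h2, h12, h21]
  module
end

section
/- Let (A, ∘₁, ∘₂) be a matching dialgebra over a field k and define the brackets [x, y]₁ := x ∘₁ y − y ∘₁ x and [x, y]₂ := x ∘₂ y − y ∘₂ x. Then the Lie brackets [,]₁ and [,]₂ are compatible: for all scalars α, β ∈ k, the bracket [x, y] := α [x, y]₁ + β [x, y]₂ is a Lie bracket on A, i.e. it is bilinear, skew-symmetric ([x, y] = −[y, x]), and satisfies the Jacobi identity [[x, y], z] + [[z, x], y] + [[y, z], x] = 0 for all x, y, z ∈ A. -/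
/-- In a matching dialgebra `(A, o1, o2)` over a field `k`, the commutator brackets
`[x,y]₁ = x ∘₁ y - y ∘₁ x` and `[x,y]₂ = x ∘₂ y - y ∘₂ x` are compatible Lie
brackets: every linear combination `[x,y] = α • [x,y]₁ + β • [x,y]₂` is bilinear,
skew-symmetric and satisfies the Jacobi identity. -/
theorem matching_dialgebra_compatible_lie
    {k A : Type*} [Field k] [AddCommGroup A] [Module k A]
    (o1 o2 : A →ₗ[k] A →ₗ[k] A)
    (h1 : ∀ x y z : A, o1 (o1 x y) z = o1 x (o1 y z))
    (h2 : ∀ x y z : A, o2 (o2 x y) z = o2 x (o2 y z))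
    (h12 : ∀ x y z : A, o2 (o1 x y) z = o1 x (o2 y z))
    (h21 : ∀ x y z : A, o1 (o2 x y) z = o2 x (o1 y z)) :
    ∀ (α β : k) (br : A → A → A),
      (∀ x y : A, br x y = α • (o1 x y - o1 y x) + β • (o2 x y - o2 y x)) →
      ((∀ x x' y : A, br (x + x') y = br x y + br x' y) ∧
       (∀ (c : k) (x y : A), br (c • x) y = c • br x y) ∧
       (∀ x y y' : A, br x (y + y') = br x y + br x y') ∧
       (∀ (c : k) (x y : A), br x (c • y) = c • br x y) ∧
       (∀ x y : A, br x y = -br y x) ∧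
       (∀ x y z : A, br (br x y) z + br (br z x) y + br (br y z) x = 0)) := by
  intro α β br hbr
  refine ⟨?_, ?_, ?_, ?_, ?_, ?_⟩
  · intro x x' y; simp only [hbr, map_add, LinearMap.add_apply]; module
  · intro c x y; simp only [hbr, map_smul, LinearMap.smul_apply]; module
  · intro x y y'; simp only [hbr, map_add, LinearMap.add_apply]; module
  · intro c x y; simp only [hbr, map_smul, LinearMap.smul_apply]; module
  · intro x y; simp only [hbr]; module
  · intro x y z
    simp only [hbr, map_add, map_sub, map_smul, LinearMap.add_apply,
      LinearMap.sub_apply, LinearMap.smul_apply]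
    simp only [h1, h2, h12, h21]
    module
end

section
/- Let (A, ∘₁, ∘₂) be a matching dialgebra over a field k. Define [x, y]₁ := x ∘₁ y − y ∘₁ x, [x, y]₂ := x ∘₂ y − y ∘₂ x, and [x, y]₍₁,₂₎ := x ∘₁ y − y ∘₂ x. Then for all x, y, z ∈ A: [[x,y]₍₁,₂₎, z]₍₁,₂₎ − [x, [y,z]₍₁,₂₎]₍₁,₂₎ − ([[y,x]₍₁,₂₎, z]₍₁,₂₎ − [y, [x,z]₍₁,₂₎]₍₁,₂₎) = ([x,y]₂) ∘₁ z − z ∘₂ ([x,y]₁). -/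
/-- In a matching dialgebra `(A, o1, o2)`, with `[x,y]_{1,2} := x ∘₁ y - y ∘₂ x`,
the deviation of `[,]_{1,2}` from being pre-Lie equals
`([x,y]₂) ∘₁ z - z ∘₂ ([x,y]₁)`. -/
theorem matching_dialgebra_preLie_deviation_left
    {k A : Type*} [Field k] [AddCommGroup A] [Module k A]
    (o1 o2 : A →ₗ[k] A →ₗ[k] A)
    (h1 : ∀ x y z : A, o1 (o1 x y) z = o1 x (o1 y z))
    (h2 : ∀ x y z : A, o2 (o2 x y) z = o2 x (o2 y z))
    (h12 : ∀ x y z : A, o2 (o1 x y) z = o1 x (o2 y z))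
    (h21 : ∀ x y z : A, o1 (o2 x y) z = o2 x (o1 y z))
    (br : A → A → A) (hbr : ∀ x y : A, br x y = o1 x y - o2 y x) :
    ∀ x y z : A,
      br (br x y) z - br x (br y z) - (br (br y x) z - br y (br x z)) =
        o1 (o2 x y - o2 y x) z - o2 z (o1 x y - o1 y x) := by
  intro x y z
  simp only [hbr, map_sub, LinearMap.sub_apply, h1, h2, h12, h21]
  abel
end

section
/- Let (A, ∘₁, ∘₂) be a matching dialgebra over a field k. Define [x, y]₁ := x ∘₁ y − y ∘₁ x, [x, y]₂ := x ∘₂ y − y ∘₂ x, and [x, y]₍₂,₁₎ := x ∘₂ y − y ∘₁ x. Then for all x, y, z ∈ A: [[x,y]₍₂,₁₎, z]₍₂,₁₎ − [x, [y,z]₍₂,₁₎]₍₂,₁₎ − ([[y,x]₍₂,₁₎, z]₍₂,₁₎ − [y, [x,z]₍₂,₁₎]₍₂,₁₎) = ([x,y]₁) ∘₂ z − z ∘₁ ([x,y]₂). -/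
/-- In a matching dialgebra `(A, o1, o2)`, with `[x,y]_{2,1} := x ∘₂ y - y ∘₁ x`,
the deviation of `[,]_{2,1}` from being pre-Lie equals
`([x,y]₁) ∘₂ z - z ∘₁ ([x,y]₂)`. -/
theorem matching_dialgebra_preLie_deviation_right
    {k A : Type*} [Field k] [AddCommGroup A] [Module k A]
    (o1 o2 : A →ₗ[k] A →ₗ[k] A)
    (h1 : ∀ x y z : A, o1 (o1 x y) z = o1 x (o1 y z))
    (h2 : ∀ x y z : A, o2 (o2 x y) z = o2 x (o2 y z))
    (h12 : ∀ x y z : A, o2 (o1 x y) z = o1 x (o2 y z))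
    (h21 : ∀ x y z : A, o1 (o2 x y) z = o2 x (o1 y z))
    (br : A → A → A) (hbr : ∀ x y : A, br x y = o2 x y - o1 y x) :
    ∀ x y z : A,
      br (br x y) z - br x (br y z) - (br (br y x) z - br y (br x z)) =
        o2 (o1 x y - o1 y x) z - o1 z (o2 x y - o2 y x) := by
  intro x y z
  simp only [hbr, map_sub, LinearMap.sub_apply, h1, h2, h12, h21]
  abel
end

section
/- Let (A, ∘₁, ∘₂) be a matching dialgebra over a field k in which both products ∘₁ and ∘₂ are commutative. Define x * y := x ∘₁ y − y ∘₂ x. Then (A, *) is a pre-Lie algebra: (x * y) * z − x * (y * z) = (y * x) * z − y * (x * z) for all x, y, z ∈ A. -/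
/-- In a matching dialgebra `(A, o1, o2)` with both products commutative,
`x * y := x ∘₁ y - y ∘₂ x` defines a pre-Lie algebra. -/
theorem matching_dialgebra_comm_preLie
    {k A : Type*} [Field k] [AddCommGroup A] [Module k A]
    (o1 o2 : A →ₗ[k] A →ₗ[k] A)
    (h1 : ∀ x y z : A, o1 (o1 x y) z = o1 x (o1 y z))
    (h2 : ∀ x y z : A, o2 (o2 x y) z = o2 x (o2 y z))
    (h12 : ∀ x y z : A, o2 (o1 x y) z = o1 x (o2 y z))
    (h21 : ∀ x y z : A, o1 (o2 x y) z = o2 x (o1 y z))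
    (hc1 : ∀ x y : A, o1 x y = o1 y x)
    (hc2 : ∀ x y : A, o2 x y = o2 y x)
    (star : A → A → A) (hstar : ∀ x y : A, star x y = o1 x y - o2 y x) :
    ∀ x y z : A,
      star (star x y) z - star x (star y z) =
        star (star y x) z - star y (star x z) := by
  intro x y z
  have e : o2 y (o1 x z) = o2 x (o1 y z) := by
    have l : o2 y (o1 x z) = o2 z (o1 y x) := by
      rw [hc2 y (o1 x z), h12, hc1 x (o2 z y), h21]
    have r : o2 x (o1 y z) = o2 z (o1 y x) := by
      rw [hc2 x (o1 y z), h12, hc1 y (o2 z x), h21, hc1 x y]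
    rw [l, r]
  simp only [hstar, map_sub, LinearMap.sub_apply, h1, h2, h12, h21]
  rw [e, hc1 x y]
  abel
end

section
/- Let (A, ∘₁, ∘₂) be a matching dialgebra over a field k in which both products ∘₁ and ∘₂ are commutative. Define x * y := x ∘₁ y − y ∘₂ x. Then (A, *) is an assosymmetric (bi-symmetric) algebra: for all x, y, z ∈ A, both (x * y) * z − x * (y * z) = (y * x) * z − y * (x * z) and (x * y) * z − x * (y * z) = (x * z) * y − x * (z * y) hold. -/
/-- In a matching dialgebra `(A, o1, o2)` with both products commutative,
`x * y := x ∘₁ y - y ∘₂ x` defines an assosymmetric (bi-symmetric) algebra: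
the associator is symmetric in its first two and in its last two arguments. -/
theorem matching_dialgebra_comm_assosymmetric
    {k A : Type*} [Field k] [AddCommGroup A] [Module k A]
    (o1 o2 : A →ₗ[k] A →ₗ[k] A)
    (h1 : ∀ x y z : A, o1 (o1 x y) z = o1 x (o1 y z))
    (h2 : ∀ x y z : A, o2 (o2 x y) z = o2 x (o2 y z))
    (h12 : ∀ x y z : A, o2 (o1 x y) z = o1 x (o2 y z))
    (h21 : ∀ x y z : A, o1 (o2 x y) z = o2 x (o1 y z))
    (hc1 : ∀ x y : A, o1 x y = o1 y x)
    (hc2 : ∀ x y : A, o2 x y = o2 y x)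
    (star : A → A → A) (hstar : ∀ x y : A, star x y = o1 x y - o2 y x) :
    (∀ x y z : A,
      star (star x y) z - star x (star y z) =
        star (star y x) z - star y (star x z)) ∧
    (∀ x y z : A,
      star (star x y) z - star x (star y z) =
        star (star x z) y - star x (star z y)) := by
  have key : ∀ x y z : A, star (star x y) z = star x (star y z) := by
    intro x y z
    simp only [hstar, map_sub, LinearMap.sub_apply]
    have e1 : o1 (o1 x y) z = o1 x (o1 y z) := h1 x y z
    have e2 : o1 (o2 y x) z = o2 (o1 y z) x := by
      rw [hc2 y x, h21, hc2]
    have e3 : o2 z (o1 x y) = o1 x (o2 z y) := by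
      rw [hc2 z (o1 x y), h12, hc2 y z]
    have e4 : o2 z (o2 y x) = o2 (o2 z y) x := (h2 z y x).symm
    rw [e1, e2, e3, e4]; abel
  constructor <;> intro x y z <;> simp [key, sub_self]
end

section
/- Let (A, ∘₁, ∘₂) be a matching dialgebra over a field k such that x ∘₁ y − y ∘₁ x = x ∘₂ y − y ∘₂ x for all x, y ∈ A. Define the product x ∘ y := x ∘₁ y − y ∘₂ x and the bracket [x, y] := x ∘₁ y − y ∘₁ x. Then (A, ∘, [,]) is a left PostLie algebra: for all x, y, z ∈ A, (i) [,] is skew-symmetric and satisfies the Jacobi identity [[x,y],z] + [[z,x],y] + [[y,z],x] = 0; (ii) (x ∘ y) ∘ z − x ∘ (y ∘ z) − (y ∘ x) ∘ z + y ∘ (x ∘ z) − [x, y] ∘ z = 0; and (iii) z ∘ [x, y] − [z ∘ x, y] − [x, z ∘ y] = 0. -/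
/-- In a matching dialgebra `(A, o1, o2)` whose two commutator brackets coincide,
the product `x ∘ y := x ∘₁ y - y ∘₂ x` together with the bracket
`[x,y] := x ∘₁ y - y ∘₁ x` forms a left PostLie algebra. -/
theorem matching_dialgebra_postLie
    {k A : Type*} [Field k] [AddCommGroup A] [Module k A]
    (o1 o2 : A →ₗ[k] A →ₗ[k] A)
    (h1 : ∀ x y z : A, o1 (o1 x y) z = o1 x (o1 y z))
    (h2 : ∀ x y z : A, o2 (o2 x y) z = o2 x (o2 y z))
    (h12 : ∀ x y z : A, o2 (o1 x y) z = o1 x (o2 y z))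
    (h21 : ∀ x y z : A, o1 (o2 x y) z = o2 x (o1 y z))
    (hcomm : ∀ x y : A, o1 x y - o1 y x = o2 x y - o2 y x)
    (circ : A → A → A) (hcirc : ∀ x y : A, circ x y = o1 x y - o2 y x)
    (br : A → A → A) (hbr : ∀ x y : A, br x y = o1 x y - o1 y x) :
    (∀ x y : A, br x y = -br y x) ∧
    (∀ x y z : A, br (br x y) z + br (br z x) y + br (br y z) x = 0) ∧
    (∀ x y z : A,
      circ (circ x y) z - circ x (circ y z) - circ (circ y x) z +
        circ y (circ x z) - circ (br x y) z = 0) ∧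
    (∀ x y z : A, circ z (br x y) - br (circ z x) y - br x (circ z y) = 0) := by
  have hm : ∀ a b c : A, o1 a (o1 b c) - o1 a (o1 c b) = o1 a (o2 b c) - o1 a (o2 c b) := by
    intro a b c
    simpa only [map_sub] using congrArg (o1 a) (hcomm b c)
  have hl : ∀ a b c : A, o1 (o1 b c) a - o1 (o1 c b) a = o1 (o2 b c) a - o1 (o2 c b) a := by
    intro a b c
    simpa only [map_sub, LinearMap.sub_apply] using congrArg (fun t => o1 t a) (hcomm b c)
  refine ⟨?_, ?_, ?_, ?_⟩
  · intro x y
    rw [hbr, hbr]; abel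
  · intro x y z
    simp only [hbr, map_sub, LinearMap.sub_apply]
    linear_combination (norm := module) h1 x y z - h1 x z y - h1 y x z + h1 y z x +
      h1 z x y - h1 z y x
  · intro x y z
    simp only [hcirc, hbr, map_sub, LinearMap.sub_apply]
    linear_combination (norm := module)
      (-1 : k) • h1 x y z + h12 x y z + h21 x y z +
      (2 : k) • h1 x z y - (2 : k) • h12 x z y - h21 x z y +
      h1 y x z - h12 y x z - h21 y x z -
      (2 : k) • h1 y z x + (2 : k) • h12 y z x + h21 y z x -
      (2 : k) • h1 z x y + h2 z x y + h12 z x y + h21 z x y +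
      (2 : k) • h1 z y x - h2 z y x - h12 z y x - h21 z y x -
      hcomm x (o1 y z) + hcomm x (o1 z y) + hcomm y (o1 x z) - hcomm y (o1 z x) -
      hcomm z (o1 x y) + hcomm z (o1 y x) -
      hm x y z + hl x y z + hm y x z - hl y x z - hm z x y
  · intro x y z
    simp only [hcirc, hbr, map_sub, LinearMap.sub_apply]
    linear_combination (norm := module)
      (-1 : k) • h12 x y z + h21 x z y + h12 y x z - h21 y z x - h12 z x y + h12 z y x -
      hcomm x (o1 z y) + hcomm y (o1 z x) + hm z x y
end

section
/- Let V be a vector space over a field k. Then there exists a matching dialgebra (M, μ₁, μ₂) over k together with a linear map j : V → M with the following universal property: for every matching dialgebra (R, m₁, m₂) over k and every linear map f : V → R, there exists a unique linear map φ : M → R such that φ ∘ j = f and φ(μ₁(u, v)) = m₁(φ(u), φ(v)) and φ(μ₂(u, v)) = m₂(φ(u), φ(v)) for all u, v ∈ M (i.e. a unique homomorphism of matching dialgebras extending f). -/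
universe u v w

open TensorProduct

section Aux

variable {k : Type w} [Field k] {V : Type u} [AddCommGroup V] [Module k V]

/-- The product on `V ⊗ T(V × V)` determined by `g : V → T(V×V)`:
`(v ⊗ a) * (w ⊗ b) = v ⊗ (a * (g w * b))`. -/
noncomputable def matchMul (g : V →ₗ[k] TensorAlgebra k (V × V)) :
    (V ⊗[k] TensorAlgebra k (V × V)) →ₗ[k]
      (V ⊗[k] TensorAlgebra k (V × V)) →ₗ[k] (V ⊗[k] TensorAlgebra k (V × V)) :=
  TensorProduct.curry <|
    (TensorProduct.map LinearMap.id (LinearMap.mul' k _)) ∘ₗ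
    (TensorProduct.assoc k V _ _).toLinearMap ∘ₗ
    (TensorProduct.map LinearMap.id (LinearMap.mul' k _)) ∘ₗ
    (TensorProduct.map LinearMap.id (TensorProduct.map g LinearMap.id))

@[simp] lemma matchMul_tmul (g : V →ₗ[k] TensorAlgebra k (V × V)) (v w : V)
    (a b : TensorAlgebra k (V × V)) :
    matchMul g (v ⊗ₜ a) (w ⊗ₜ b) = v ⊗ₜ (a * (g w * b)) := by
  simp [matchMul]

end Aux

section Aux2
variable {k : Type w} [Field k] {V : Type u} [AddCommGroup V] [Module k V]

lemma matchMul_assoc (g g' : V →ₗ[k] TensorAlgebra k (V × V))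
    (x y z : V ⊗[k] TensorAlgebra k (V × V)) :
    matchMul g' (matchMul g x y) z = matchMul g x (matchMul g' y z) := by
  induction x using TensorProduct.induction_on with
  | zero => simp
  | add x₁ x₂ h₁ h₂ => simp [map_add, LinearMap.add_apply, h₁, h₂]
  | tmul v a =>
    induction y using TensorProduct.induction_on with
    | zero => simp
    | add y₁ y₂ h₁ h₂ => simp [map_add, LinearMap.add_apply, h₁, h₂]
    | tmul w b =>
      induction z using TensorProduct.induction_on with
      | zero => simp
      | add z₁ z₂ h₁ h₂ =>
        simp only [map_add, LinearMap.add_apply] at h₁ h₂ ⊢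
        rw [h₁, h₂]
      | tmul u c => simp [mul_assoc]

variable {R : Type v} [AddCommGroup R] [Module k R]
  (m₁ m₂ : R →ₗ[k] R →ₗ[k] R) (f : V →ₗ[k] R)

/-- The generator of the right action of `T(V×V)` on `R`. -/
noncomputable def actGen : (V × V) →ₗ[k] (Module.End k R)ᵐᵒᵖ :=
  (MulOpposite.opLinearEquiv k).toLinearMap ∘ₗ
    ((m₁.flip ∘ₗ f ∘ₗ LinearMap.fst k V V) + (m₂.flip ∘ₗ f ∘ₗ LinearMap.snd k V V))

/-- The right action of `T(V×V)` on `R`. -/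
noncomputable def actG : TensorAlgebra k (V × V) →ₗ[k] Module.End k R :=
  (MulOpposite.opLinearEquiv k).symm.toLinearMap ∘ₗ
    (TensorAlgebra.lift k (actGen m₁ m₂ f)).toLinearMap

@[simp] lemma actG_one (r : R) : actG m₁ m₂ f 1 r = r := by
  simp [actG]

@[simp] lemma actG_algebraMap (c : k) (r : R) :
    actG m₁ m₂ f (algebraMap k _ c) r = c • r := by
  simp [actG]

lemma actG_mul (a b : TensorAlgebra k (V × V)) (r : R) :
    actG m₁ m₂ f (a * b) r = actG m₁ m₂ f b (actG m₁ m₂ f a r) := by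
  simp [actG, map_mul, MulOpposite.unop_mul]

@[simp] lemma actG_ι (x y : V) (r : R) :
    actG m₁ m₂ f (TensorAlgebra.ι k (x, y)) r = m₁ r (f x) + m₂ r (f y) := by
  simp [actG, actGen, TensorAlgebra.lift_ι_apply]

end Aux2

section Aux3
variable {k : Type w} [Field k] {V : Type u} [AddCommGroup V] [Module k V]
variable {R : Type v} [AddCommGroup R] [Module k R]
  (m₁ m₂ : R →ₗ[k] R →ₗ[k] R) (f : V →ₗ[k] R)

lemma actG_comm
    (h1 : ∀ x y z : R, m₁ (m₁ x y) z = m₁ x (m₁ y z))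
    (h2 : ∀ x y z : R, m₂ (m₂ x y) z = m₂ x (m₂ y z))
    (h3 : ∀ x y z : R, m₂ (m₁ x y) z = m₁ x (m₂ y z))
    (h4 : ∀ x y z : R, m₁ (m₂ x y) z = m₂ x (m₁ y z))
    (a : TensorAlgebra k (V × V)) :
    ∀ r s : R, actG m₁ m₂ f a (m₁ r s) = m₁ r (actG m₁ m₂ f a s) ∧
      actG m₁ m₂ f a (m₂ r s) = m₂ r (actG m₁ m₂ f a s) := by
  induction a using TensorAlgebra.induction with
  | algebraMap c => intro r s; simp
  | ι p =>
    obtain ⟨x, y⟩ := p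
    intro r s
    constructor
    · rw [actG_ι, actG_ι, h1, h3, map_add]
    · rw [actG_ι, actG_ι, h4, h2, map_add]
  | mul a b ha hb =>
    intro r s
    constructor
    · rw [actG_mul, actG_mul, (ha r s).1, (hb r _).1]
    · rw [actG_mul, actG_mul, (ha r s).2, (hb r _).2]
  | add a b ha hb =>
    intro r s
    constructor
    · simp only [map_add, LinearMap.add_apply, (ha r s).1, (hb r s).1]
    · simp only [map_add, LinearMap.add_apply, (ha r s).2, (hb r s).2]

/-- The universal linear map `V ⊗ T(V×V) → R`. -/
noncomputable def uphi : (V ⊗[k] TensorAlgebra k (V × V)) →ₗ[k] R :=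
  TensorProduct.lift ((actG m₁ m₂ f).flip ∘ₗ f)

@[simp] lemma uphi_tmul (v : V) (a : TensorAlgebra k (V × V)) :
    uphi m₁ m₂ f (v ⊗ₜ a) = actG m₁ m₂ f a (f v) := by
  simp [uphi]

end Aux3

section Aux4
variable {k : Type w} [Field k] {V : Type u} [AddCommGroup V] [Module k V]
variable {R : Type v} [AddCommGroup R] [Module k R]
  (m₁ m₂ : R →ₗ[k] R →ₗ[k] R) (f : V →ₗ[k] R)

lemma uphi_hom (m : R →ₗ[k] R →ₗ[k] R) (g : V →ₗ[k] TensorAlgebra k (V × V))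
    (hg : ∀ (w : V) (r : R), actG m₁ m₂ f (g w) r = m r (f w))
    (hcm : ∀ (a : TensorAlgebra k (V × V)) (r s : R),
      actG m₁ m₂ f a (m r s) = m r (actG m₁ m₂ f a s))
    (x y : V ⊗[k] TensorAlgebra k (V × V)) :
    uphi m₁ m₂ f (matchMul g x y) = m (uphi m₁ m₂ f x) (uphi m₁ m₂ f y) := by
  induction x using TensorProduct.induction_on with
  | zero => simp
  | add x₁ x₂ hx₁ hx₂ => simp [map_add, LinearMap.add_apply, hx₁, hx₂]
  | tmul v a =>
    induction y using TensorProduct.induction_on with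
    | zero => simp
    | add y₁ y₂ hy₁ hy₂ =>
      simp only [map_add, LinearMap.add_apply] at hy₁ hy₂ ⊢
      rw [hy₁, hy₂]
    | tmul w b =>
      rw [matchMul_tmul, uphi_tmul, uphi_tmul, uphi_tmul,
        actG_mul, actG_mul, hg, hcm]

end Aux4

/-- For every `k`-vector space `V` there is a free matching dialgebra on `V`:
a matching dialgebra `(M, μ₁, μ₂)` with a linear map `j : V → M` such that every
linear map `f` from `V` to a matching dialgebra `(R, m₁, m₂)` extends uniquely to
a homomorphism `φ : M → R` of matching dialgebras with `φ ∘ j = f`. -/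
theorem exists_free_matching_dialgebra
    {k : Type w} [Field k] (V : Type u) [AddCommGroup V] [Module k V] :
    ∃ (M : ModuleCat.{max u w} k) (μ₁ μ₂ : M →ₗ[k] M →ₗ[k] M) (j : V →ₗ[k] M),
      ((∀ x y z : M, μ₁ (μ₁ x y) z = μ₁ x (μ₁ y z)) ∧
       (∀ x y z : M, μ₂ (μ₂ x y) z = μ₂ x (μ₂ y z)) ∧
       (∀ x y z : M, μ₂ (μ₁ x y) z = μ₁ x (μ₂ y z)) ∧
       (∀ x y z : M, μ₁ (μ₂ x y) z = μ₂ x (μ₁ y z))) ∧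
      ∀ (R : ModuleCat.{v} k) (m₁ m₂ : R →ₗ[k] R →ₗ[k] R),
        ((∀ x y z : R, m₁ (m₁ x y) z = m₁ x (m₁ y z)) ∧
         (∀ x y z : R, m₂ (m₂ x y) z = m₂ x (m₂ y z)) ∧
         (∀ x y z : R, m₂ (m₁ x y) z = m₁ x (m₂ y z)) ∧
         (∀ x y z : R, m₁ (m₂ x y) z = m₂ x (m₁ y z))) →
        ∀ f : V →ₗ[k] R,
          ∃! φ : M →ₗ[k] R,
            (∀ v : V, φ (j v) = f v) ∧
            (∀ u w : M, φ (μ₁ u w) = m₁ (φ u) (φ w)) ∧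
            (∀ u w : M, φ (μ₂ u w) = m₂ (φ u) (φ w)) := by
  classical
  set g₁ : V →ₗ[k] TensorAlgebra k (V × V) :=
    (TensorAlgebra.ι k).comp (LinearMap.inl k V V) with hg₁def
  set g₂ : V →ₗ[k] TensorAlgebra k (V × V) :=
    (TensorAlgebra.ι k).comp (LinearMap.inr k V V) with hg₂def
  refine ⟨ModuleCat.of k (V ⊗[k] TensorAlgebra k (V × V)),
    matchMul g₁, matchMul g₂,
    (TensorProduct.mk k V (TensorAlgebra k (V × V))).flip 1,
    ⟨matchMul_assoc g₁ g₁, matchMul_assoc g₂ g₂,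
     matchMul_assoc g₁ g₂, matchMul_assoc g₂ g₁⟩, ?_⟩
  rintro R m₁ m₂ ⟨h1, h2, h3, h4⟩ f
  have hcm := actG_comm m₁ m₂ f h1 h2 h3 h4
  have hgl₁ : ∀ (x : V) (r : R), actG m₁ m₂ f (g₁ x) r = m₁ r (f x) := by
    intro x r; simp [hg₁def]
  have hgl₂ : ∀ (x : V) (r : R), actG m₁ m₂ f (g₂ x) r = m₂ r (f x) := by
    intro x r; simp [hg₂def]
  have hj : ∀ v : V,
      ((TensorProduct.mk k V (TensorAlgebra k (V × V))).flip 1) v = v ⊗ₜ[k] 1 := fun _ => rfl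
  refine ⟨uphi m₁ m₂ f, ⟨?_, ?_, ?_⟩, ?_⟩
  · intro v
    show uphi m₁ m₂ f (v ⊗ₜ[k] (1 : TensorAlgebra k (V × V))) = f v
    rw [uphi_tmul, actG_one]
  · exact uphi_hom m₁ m₂ f m₁ g₁ hgl₁ (fun a r s => (hcm a r s).1)
  · exact uphi_hom m₁ m₂ f m₂ g₂ hgl₂ (fun a r s => (hcm a r s).2)
  · rintro φ' ⟨hj', hμ₁', hμ₂'⟩
    have hj'1 : ∀ v : V, φ' (v ⊗ₜ[k] (1 : TensorAlgebra k (V × V))) = f v := by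
      intro v; rw [← hj v]; exact hj' v
    have happ₁ : ∀ (v x : V) (b : TensorAlgebra k (V × V)),
        φ' (v ⊗ₜ[k] (b * g₁ x)) = m₁ (φ' (v ⊗ₜ[k] b)) (f x) := by
      intro v x b
      have he : matchMul g₁ (v ⊗ₜ[k] b) (x ⊗ₜ[k] (1 : TensorAlgebra k (V × V)))
          = v ⊗ₜ[k] (b * g₁ x) := by rw [matchMul_tmul, mul_one]
      calc φ' (v ⊗ₜ[k] (b * g₁ x))
          = φ' (matchMul g₁ (v ⊗ₜ[k] b) (x ⊗ₜ[k] (1 : TensorAlgebra k (V × V)))) := by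
            rw [he]
        _ = m₁ (φ' (v ⊗ₜ[k] b)) (φ' (x ⊗ₜ[k] (1 : TensorAlgebra k (V × V)))) := hμ₁' _ _
        _ = m₁ (φ' (v ⊗ₜ[k] b)) (f x) := by rw [hj'1]
    have happ₂ : ∀ (v x : V) (b : TensorAlgebra k (V × V)),
        φ' (v ⊗ₜ[k] (b * g₂ x)) = m₂ (φ' (v ⊗ₜ[k] b)) (f x) := by
      intro v x b
      have he : matchMul g₂ (v ⊗ₜ[k] b) (x ⊗ₜ[k] (1 : TensorAlgebra k (V × V)))
          = v ⊗ₜ[k] (b * g₂ x) := by rw [matchMul_tmul, mul_one]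
      calc φ' (v ⊗ₜ[k] (b * g₂ x))
          = φ' (matchMul g₂ (v ⊗ₜ[k] b) (x ⊗ₜ[k] (1 : TensorAlgebra k (V × V)))) := by
            rw [he]
        _ = m₂ (φ' (v ⊗ₜ[k] b)) (φ' (x ⊗ₜ[k] (1 : TensorAlgebra k (V × V)))) := hμ₂' _ _
        _ = m₂ (φ' (v ⊗ₜ[k] b)) (f x) := by rw [hj'1]
    have u_happ₁ : ∀ (v x : V) (b : TensorAlgebra k (V × V)),
        uphi m₁ m₂ f (v ⊗ₜ[k] (b * g₁ x)) = m₁ (uphi m₁ m₂ f (v ⊗ₜ[k] b)) (f x) := by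
      intro v x b; rw [uphi_tmul, uphi_tmul, actG_mul, hgl₁]
    have u_happ₂ : ∀ (v x : V) (b : TensorAlgebra k (V × V)),
        uphi m₁ m₂ f (v ⊗ₜ[k] (b * g₂ x)) = m₂ (uphi m₁ m₂ f (v ⊗ₜ[k] b)) (f x) := by
      intro v x b; rw [uphi_tmul, uphi_tmul, actG_mul, hgl₂]
    have key : ∀ a : TensorAlgebra k (V × V),
        (∀ v : V, φ' (v ⊗ₜ[k] a) = uphi m₁ m₂ f (v ⊗ₜ[k] a)) ∧
        (∀ b : TensorAlgebra k (V × V),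
          (∀ v : V, φ' (v ⊗ₜ[k] b) = uphi m₁ m₂ f (v ⊗ₜ[k] b)) →
          ∀ v : V, φ' (v ⊗ₜ[k] (b * a)) = uphi m₁ m₂ f (v ⊗ₜ[k] (b * a))) := by
      intro a
      induction a using TensorAlgebra.induction with
      | algebraMap c =>
        constructor
        · intro v
          have : v ⊗ₜ[k] (algebraMap k (TensorAlgebra k (V × V)) c)
              = c • (v ⊗ₜ[k] (1 : TensorAlgebra k (V × V))) := by
            rw [Algebra.algebraMap_eq_smul_one, TensorProduct.tmul_smul]
          rw [this, map_smul, map_smul, hj'1, uphi_tmul, actG_one]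
        · intro b hb v
          have : b * algebraMap k (TensorAlgebra k (V × V)) c = c • b := by
            rw [Algebra.algebraMap_eq_smul_one, mul_smul_comm, mul_one]
          rw [this, TensorProduct.tmul_smul, map_smul, map_smul, hb v]
      | ι p =>
        obtain ⟨x, y⟩ := p
        have hsplit : (TensorAlgebra.ι k ((x, y) : V × V)) = g₁ x + g₂ y := by
          rw [hg₁def, hg₂def]
          simp only [LinearMap.comp_apply, LinearMap.inl_apply, LinearMap.inr_apply,
            ← map_add]
          congr 1
          simp
        constructor
        · intro v
          have h1e : v ⊗ₜ[k] (TensorAlgebra.ι k ((x, y) : V × V))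
              = v ⊗ₜ[k] ((1 : TensorAlgebra k (V × V)) * g₁ x)
                + v ⊗ₜ[k] ((1 : TensorAlgebra k (V × V)) * g₂ y) := by
            rw [hsplit, one_mul, one_mul, TensorProduct.tmul_add]
          rw [h1e, map_add, map_add, happ₁, happ₂, u_happ₁, u_happ₂, hj'1, uphi_tmul, actG_one]
        · intro b hb v
          have h1e : v ⊗ₜ[k] (b * TensorAlgebra.ι k ((x, y) : V × V))
              = v ⊗ₜ[k] (b * g₁ x) + v ⊗ₜ[k] (b * g₂ y) := by
            rw [hsplit, mul_add, TensorProduct.tmul_add]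
          rw [h1e, map_add, map_add, happ₁, happ₂, u_happ₁, u_happ₂, hb v]
      | mul a₁ a₂ ha₁ ha₂ =>
        constructor
        · intro v
          have := ha₂.2 a₁ ha₁.1 v
          exact this
        · intro b hb v
          have := ha₂.2 (b * a₁) (ha₁.2 b hb) v
          rwa [mul_assoc] at this
      | add a₁ a₂ ha₁ ha₂ =>
        constructor
        · intro v
          rw [TensorProduct.tmul_add, map_add, map_add, ha₁.1 v, ha₂.1 v]
        · intro b hb v
          rw [mul_add, TensorProduct.tmul_add, map_add, map_add,
            ha₁.2 b hb v, ha₂.2 b hb v]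
    apply LinearMap.ext
    intro x
    induction x using TensorProduct.induction_on with
    | zero => simp
    | add x₁ x₂ hx₁ hx₂ => rw [map_add, map_add, hx₁, hx₂]
    | tmul v a => exact (key a).1 v
end
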